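/- Let f be holomorphic in a neighborhood of b ∈ ℂ with f(b) = 0 and f'(b) ≠ 0. Then the local inverse x(w) of w = f(x) near w = 0 satisfying x(0) = b has Taylor expansion x(w) = b + Σ_{i≥1} g_i(b) wⁱ/i!, where g_i(z) = (d/dz)^{i-1} [ ((z-b)/f(z))^i ]. -/

import Mathlib

open Filter

open Topology


namespace LagrangeAux

variable {c : ℂ} {g g' f : ℂ → ℂ}

lemma aderiv (hg : AnalyticAt ℂ g c) : AnalyticAt ℂ (deriv g) c := by
  have := hg.eventually_analyticAt
  rw [eventually_nhds_iff] at this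
  obtain ⟨t, h1, h2, h3⟩ := this
  exact (AnalyticOnNhd.deriv (fun y hy => h1 y hy)) c h3

lemma iter_add (n : ℕ) (hf : AnalyticAt ℂ f c) (hg : AnalyticAt ℂ g c) :
    iteratedDeriv n (fun z => f z + g z) c = iteratedDeriv n f c + iteratedDeriv n g c := by
  induction n generalizing f g with
  | zero => simp
  | succ n ih =>
    rw [iteratedDeriv_succ', iteratedDeriv_succ', iteratedDeriv_succ']
    have hev : deriv (fun z => f z + g z) =ᶠ[𝓝 c] fun z => deriv f z + deriv g z := by
      filter_upwards [hf.eventually_analyticAt, hg.eventually_analyticAt] with z hfz hgz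
      exact deriv_add hfz.differentiableAt hgz.differentiableAt
    rw [hev.iteratedDeriv_eq n]
    exact ih (aderiv hf) (aderiv hg)

lemma iter_const_mul (n : ℕ) (a : ℂ) (hg : AnalyticAt ℂ g c) :
    iteratedDeriv n (fun z => a * g z) c = a * iteratedDeriv n g c := by
  induction n generalizing g with
  | zero => simp
  | succ n ih =>
    rw [iteratedDeriv_succ', iteratedDeriv_succ']
    have hev : deriv (fun z => a * g z) =ᶠ[𝓝 c] fun z => a * deriv g z := by
      filter_upwards [hg.eventually_analyticAt] with z hgz
      exact deriv_const_mul a hgz.differentiableAt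
    rw [hev.iteratedDeriv_eq n]
    exact ih (aderiv hg)

lemma iter_sum {ι : Type*} (n : ℕ) (s : Finset ι) (F : ι → ℂ → ℂ)
    (h : ∀ i ∈ s, AnalyticAt ℂ (F i) c) :
    iteratedDeriv n (fun z => ∑ i ∈ s, F i z) c = ∑ i ∈ s, iteratedDeriv n (F i) c := by
  induction s using Finset.cons_induction with
  | empty =>
    have : (fun _ : ℂ => (0:ℂ)) = fun z => (0:ℂ) * z := by funext z; ring
    simp only [Finset.sum_empty]
    rw [this, iter_const_mul n 0 (by exact analyticAt_id), zero_mul]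
  | cons i s his ih =>
    simp only [Finset.sum_cons]
    rw [iter_add n (h i (Finset.mem_cons_self i s))
      (Finset.analyticAt_fun_sum s fun j hj => h j (Finset.mem_cons_of_mem hj)), ih
      (fun j hj => h j (Finset.mem_cons_of_mem hj))]

lemma iter_shift1 (n : ℕ) (hg : AnalyticAt ℂ g c) :
    iteratedDeriv n (fun z => (z - c) * g z) c = n * iteratedDeriv (n - 1) g c := by
  induction n generalizing g with
  | zero => simp
  | succ n ih =>
    rw [iteratedDeriv_succ']
    have hev : deriv (fun z => (z - c) * g z) =ᶠ[𝓝 c] fun z => g z + (z - c) * deriv g z := by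
      filter_upwards [hg.eventually_analyticAt] with z hz
      have := (((hasDerivAt_id z).sub_const c).fun_mul hz.differentiableAt.hasDerivAt).deriv
      simpa [add_comm] using this
    rw [hev.iteratedDeriv_eq n,
      iter_add n hg (by exact ((analyticAt_id.sub analyticAt_const)).mul (aderiv hg)),
      ih (aderiv hg)]
    cases n with
    | zero => simp
    | succ m =>
      rw [Nat.succ_sub_one, ← iteratedDeriv_succ']
      push_cast
      ring

lemma iter_const (n : ℕ) (a : ℂ) : iteratedDeriv n (fun _ : ℂ => a) c
    = if n = 0 then a else 0 := by
  induction n generalizing a with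
  | zero => simp
  | succ n ih =>
    rw [iteratedDeriv_succ']
    have : deriv (fun _ : ℂ => a) = fun _ : ℂ => (0:ℂ) := by
      funext z; exact deriv_const z a
    rw [this, ih 0]
    simp

lemma iter_sub (n : ℕ) (hf : AnalyticAt ℂ f c) (hg : AnalyticAt ℂ g c) :
    iteratedDeriv n (fun z => f z - g z) c = iteratedDeriv n f c - iteratedDeriv n g c := by
  have h1 : (fun z => f z - g z) = fun z => f z + (-1 : ℂ) * g z := by funext z; ring
  rw [h1, iter_add n hf (by exact analyticAt_const.mul hg), iter_const_mul n (-1) hg]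
  ring

lemma iter_shift (j : ℕ) (n : ℕ) (hg : AnalyticAt ℂ g c) :
    iteratedDeriv n (fun z => (z - c) ^ j * g z) c
      = (n.descFactorial j : ℂ) * iteratedDeriv (n - j) g c := by
  induction j generalizing n g with
  | zero => simp
  | succ j ih =>
    have h1 : (fun z => (z - c) ^ (j + 1) * g z) = fun z => (z - c) * ((z - c) ^ j * g z) := by
      funext z; ring
    rw [h1, iter_shift1 n (by exact ((analyticAt_id.sub analyticAt_const).pow j).mul hg),
      ih (n - 1) hg]
    cases n with
    | zero => simp
    | succ m =>
      rw [Nat.succ_sub_one, Nat.succ_descFactorial_succ, Nat.succ_sub_succ]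
      push_cast
      ring

lemma iter_monomial (k m : ℕ) :
    iteratedDeriv k (fun w : ℂ => w ^ m) 0 = if k = m then (k.factorial : ℂ) else 0 := by
  have h1 : (fun w : ℂ => w ^ m) = fun w : ℂ => (w - 0) ^ m * 1 := by funext w; ring
  rw [h1, iter_shift m k analyticAt_const, iter_const]
  rcases lt_trichotomy k m with hlt | heq | hgt
  · rw [Nat.descFactorial_eq_zero_iff_lt.mpr hlt, if_neg (Nat.ne_of_lt hlt)]
    simp
  · subst heq
    rw [if_pos rfl, if_pos (by omega), Nat.descFactorial_self]
    simp
  · rw [if_neg (by omega), if_neg (Nat.ne_of_gt hgt)]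
    ring

end LagrangeAux

open LagrangeAux in
/-- **Lagrange inversion formula.**  If `f` is holomorphic near `b` with a simple zero at
`b`, `u` is the holomorphic extension of `z ↦ (z - b) / f z` near `b`, and `h` is the
local inverse of `f` near `0` with `h 0 = b`, then the Taylor expansion of `h` at `0` is
`h w = b + ∑_{i ≥ 1} g_i(b) wⁱ / i!` with `g_i(b) = (d/dz)^{i-1} [((z-b)/f z)^i]` at
`z = b`; equivalently the `i`-th derivative of `h` at `0` equals
`(d/dz)^{i-1} [(u z)^i]` at `z = b`. -/
theorem lagrange_inversion
    (f : ℂ → ℂ) (b : ℂ) (hf : AnalyticAt ℂ f b) (hfb : f b = 0) (hfb' : deriv f b ≠ 0)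
    (u : ℂ → ℂ) (hu : AnalyticAt ℂ u b)
    (huf : ∀ᶠ z in nhdsWithin b {b}ᶜ, u z = (z - b) / f z)
    (h : ℂ → ℂ) (hh : AnalyticAt ℂ h 0) (hh0 : h 0 = b)
    (hinv : ∀ᶠ w in nhds 0, f (h w) = w) :
    ∀ i : ℕ, 1 ≤ i →
      iteratedDeriv i h 0 = iteratedDeriv (i - 1) (fun z => u z ^ i) b := by
  intro n hn
  -- strict derivative and local inverse of f
  obtain ⟨p, hp⟩ := hf
  have hf : AnalyticAt ℂ f b := ⟨p, hp⟩
  have hsd : HasStrictDerivAt f (deriv f b) b := hp.deriv ▸ hp.hasStrictDerivAt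
  have hgl : ∀ᶠ z in 𝓝 b, (hsd.hasStrictFDerivAt_equiv hfb').localInverse _ _ _ (f z) = z :=
    (hsd.hasStrictFDerivAt_equiv hfb').eventually_left_inverse
  set g : ℂ → ℂ := (hsd.hasStrictFDerivAt_equiv hfb').localInverse _ _ _ with hgdef
  -- h ∘ f = id near b
  have hfz0 : Filter.Tendsto f (𝓝 b) (𝓝 0) := by
    simpa [hfb] using hf.continuousAt.tendsto
  have hhf : ∀ᶠ z in 𝓝 b, h (f z) = z := by
    have h1 : ∀ᶠ z in 𝓝 b, f (h (f z)) = f z := hfz0.eventually hinv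
    have h2 : Filter.Tendsto (fun z => h (f z)) (𝓝 b) (𝓝 b) := by
      have := hh.continuousAt.tendsto.comp hfz0
      rw [hh0] at this; exact this
    have h3 : ∀ᶠ z in 𝓝 b, g (f (h (f z))) = h (f z) := h2.eventually hgl
    filter_upwards [h1, h3, hgl] with z e1 e3 e4
    rw [← e3, e1, e4]
  -- u * f = z - b near b
  have hufb : ∀ᶠ z in 𝓝 b, u z * f z = z - b := by
    have hfne : ∀ᶠ z in 𝓝[≠] b, f z ≠ 0 := by
      filter_upwards [hhf.filter_mono nhdsWithin_le_nhds, self_mem_nhdsWithin]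
        with z e1 e2 hf0
      exact e2 (show z ∈ ({b} : Set ℂ) from by rw [Set.mem_singleton_iff, ← e1, hf0, hh0])
    have heq : ∀ᶠ z in 𝓝[≠] b, u z * f z = z - b := by
      filter_upwards [huf, hfne] with z e1 e2
      rw [e1]; field_simp
    exact ((hu.mul hf).frequently_eq_iff_eventually_eq
      (by exact analyticAt_id.sub analyticAt_const)).mp heq.frequently
  -- u b * f' b = 1
  have hub : u b * deriv f b = 1 := by
    have hd1 : deriv (fun z => u z * f z) b = deriv (fun z => z - b) b :=
      Filter.EventuallyEq.deriv_eq hufb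
    rw [deriv_fun_mul hu.differentiableAt hf.differentiableAt, hfb, mul_zero, zero_add] at hd1
    rw [hd1]
    simp
  have hub0 : u b ≠ 0 := by
    intro e; rw [e, zero_mul] at hub; exact zero_ne_one hub
  set v : ℂ → ℂ := fun z => (u z)⁻¹ with hvdef
  have hva : AnalyticAt ℂ v b := hu.inv hub0
  have hune : ∀ᶠ z in 𝓝 b, u z ≠ 0 := hu.continuousAt.eventually_ne hub0
  have hfv : ∀ᶠ z in 𝓝 b, f z = (z - b) * v z := by
    filter_upwards [hufb, hune] with z e1 e2
    rw [hvdef]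
    field_simp
    rw [← e1]; ring
  -- Taylor coefficients of h at 0
  set a : ℕ → ℂ := fun m => iteratedDeriv m h 0 / m.factorial with hadef
  set φ : ℂ → ℂ := fun w => h w - ∑ m ∈ Finset.range (n + 1), a m * w ^ m with hφdef
  have hsa : ∀ w₀ : ℂ, AnalyticAt ℂ (fun w : ℂ => ∑ m ∈ Finset.range (n + 1), a m * w ^ m) w₀ :=
    fun w₀ => Finset.analyticAt_fun_sum _ fun m _ =>
      analyticAt_const.mul (by exact analyticAt_id.pow m)
  have hφa : AnalyticAt ℂ φ 0 := hh.sub (hsa 0)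
  have hφk : ∀ k ≤ n, iteratedDeriv k φ 0 = 0 := by
    intro k hk
    rw [hφdef, iter_sub k hh (hsa 0), iter_sum k _ (fun m w => a m * w ^ m)
      (fun m _ => analyticAt_const.mul (by exact analyticAt_id.pow m))]
    have hterm : ∀ m ∈ Finset.range (n + 1),
        iteratedDeriv k (fun w : ℂ => a m * w ^ m) 0
          = if k = m then a m * k.factorial else 0 := by
      intro m _
      rw [iter_const_mul k (a m) (by exact analyticAt_id.pow m), iter_monomial]
      split_ifs <;> simp
    rw [Finset.sum_congr rfl hterm, Finset.sum_ite_eq (Finset.range (n + 1)) k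
      (fun m => a m * k.factorial)]
    rw [if_pos (Finset.mem_range.mpr (by omega)), hadef]
    have : (k.factorial : ℂ) ≠ 0 := by
      exact_mod_cast Nat.cast_ne_zero.mpr k.factorial_ne_zero
    field_simp
    ring
  -- factor out w ^ (n + 1) from the remainder
  obtain ⟨ψ, hψa, hψ⟩ : ∃ ψ : ℂ → ℂ, AnalyticAt ℂ ψ 0 ∧
      ∀ᶠ w in 𝓝 0, φ w = w ^ (n + 1) * ψ w := by
    by_cases h0 : ∀ᶠ w in 𝓝 0, φ w = 0
    · exact ⟨fun _ => 0, analyticAt_const, by filter_upwards [h0] with w e; simp [e]⟩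
    · obtain ⟨j, g0, hg0a, hg00, hg0e⟩ := hφa.exists_eventuallyEq_pow_smul_nonzero_iff.mpr h0
      have hjn : n + 1 ≤ j := by
        by_contra hlt
        push_neg at hlt
        have e1 : iteratedDeriv j φ 0 = 0 := hφk j (by omega)
        have e2 : iteratedDeriv j φ 0 = (j.descFactorial j : ℂ) * g0 0 := by
          have : iteratedDeriv j φ 0 = iteratedDeriv j (fun w => (w - 0) ^ j * g0 w) 0 := by
            refine Filter.EventuallyEq.iteratedDeriv_eq j ?_
            filter_upwards [hg0e] with w e
            simpa [smul_eq_mul] using e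
          rw [this, iter_shift j j hg0a, Nat.sub_self, iteratedDeriv_zero]
        rw [e1, Nat.descFactorial_self] at e2
        refine hg00 ?_
        have hfac : (j.factorial : ℂ) ≠ 0 := by
          exact_mod_cast Nat.cast_ne_zero.mpr j.factorial_ne_zero
        exact (mul_eq_zero.mp e2.symm).resolve_left hfac
      refine ⟨fun w => w ^ (j - (n + 1)) * g0 w,
        (by exact (analyticAt_id.pow _).mul hg0a), ?_⟩
      filter_upwards [hg0e] with w e
      rw [e, smul_eq_mul, ← mul_assoc, ← pow_add, sub_zero]
      congr 2
      omega
  -- remainder identity near b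
  set q : ℂ → ℂ := fun z => v z ^ (n + 1) * ψ (f z) with hqdef
  have hqa : AnalyticAt ℂ q b :=
    (hva.pow _).mul (hψa.comp_of_eq hf hfb)
  have hR : ∀ᶠ z in 𝓝 b,
      z - ∑ m ∈ Finset.range (n + 1), a m * f z ^ m = (z - b) ^ (n + 1) * q z := by
    filter_upwards [hhf, hfz0.eventually hψ, hfv] with z e1 e2 e3
    have e4 : φ (f z) = z - ∑ m ∈ Finset.range (n + 1), a m * f z ^ m := by
      rw [hφdef]; simp only []; rw [e1]
    rw [← e4, e2, hqdef]
    simp only []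
    rw [show f z ^ (n + 1) = (z - b) ^ (n + 1) * v z ^ (n + 1) by rw [e3, mul_pow]]
    ring
  -- differentiate the remainder identity
  have hE1 : ∀ᶠ z in 𝓝 b,
      1 - ∑ m ∈ Finset.range (n + 1), a m * (m * f z ^ (m - 1) * deriv f z)
        = (z - b) ^ n * (((n : ℂ) + 1) * q z + (z - b) * deriv q z) := by
    filter_upwards [hf.eventually_analyticAt, hqa.eventually_analyticAt,
      hR.eventually_nhds] with z hfz hqz hRz
    have hL : HasDerivAt (fun z => z - ∑ m ∈ Finset.range (n + 1), a m * f z ^ m)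
        (1 - ∑ m ∈ Finset.range (n + 1), a m * (m * f z ^ (m - 1) * deriv f z)) z := by
      have hterm : ∀ m ∈ Finset.range (n + 1),
          HasDerivAt (fun z => a m * f z ^ m) (a m * (m * f z ^ (m - 1) * deriv f z)) z :=
        fun m _ => (hfz.differentiableAt.hasDerivAt.pow m).const_mul (a m)
      exact (hasDerivAt_id z).sub (HasDerivAt.fun_sum hterm)
    have hRd : HasDerivAt (fun z => (z - b) ^ (n + 1) * q z)
        ((z - b) ^ n * (((n : ℂ) + 1) * q z + (z - b) * deriv q z)) z := by
      have h1 : HasDerivAt (fun z => (z - b) ^ (n + 1)) (((n : ℂ) + 1) * (z - b) ^ n) z := by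
        have := ((hasDerivAt_id z).sub_const b).fun_pow (n + 1)
        simpa using this
      have := h1.fun_mul hqz.differentiableAt.hasDerivAt
      refine this.congr_deriv ?_
      ring
    rw [← hL.deriv, ← hRd.deriv]
    exact Filter.EventuallyEq.deriv_eq hRz
  -- derivative of f in terms of v
  have hdf : ∀ᶠ z in 𝓝 b, deriv f z = v z + (z - b) * deriv v z := by
    filter_upwards [hfv.eventually_nhds, hva.eventually_analyticAt] with z e1 e2
    have h1 : deriv f z = deriv (fun y => (y - b) * v y) z := Filter.EventuallyEq.deriv_eq e1
    have h2 := (((hasDerivAt_id z).sub_const b).fun_mul e2.differentiableAt.hasDerivAt).deriv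
    simp only [id_eq] at h2
    rw [h1, h2]; ring
  -- rewriting each summand
  have hT : ∀ m, 1 ≤ m → m ≤ n → ∀ᶠ z in 𝓝 b,
      f z ^ (m - 1) * deriv f z * u z ^ n
        = (z - b) ^ (m - 1)
          * (u z ^ (n - m) + (z - b) * (u z ^ (n - m + 1) * deriv v z)) := by
    intro m hm1 hmn
    obtain ⟨m', rfl⟩ : ∃ m', m = m' + 1 := ⟨m - 1, by omega⟩
    obtain ⟨k, rfl⟩ : ∃ k, n = m' + 1 + k := ⟨n - (m' + 1), by omega⟩
    filter_upwards [hfv, hdf, hune] with z e3 edf e2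
    rw [e3, edf]
    simp only [Nat.add_sub_cancel, Nat.add_sub_cancel_left, hvdef, mul_pow]
    field_simp
    rw [div_pow, one_pow]
    field_simp
    ring
  -- the main eventual identity
  have hE2 : (fun z => u z ^ n) =ᶠ[𝓝 b] fun z =>
      (∑ m ∈ Finset.range (n + 1), (a m * m)
        * ((z - b) ^ (m - 1) * (u z ^ (n - m) + (z - b) * (u z ^ (n - m + 1) * deriv v z))))
      + (z - b) ^ n * (u z ^ n * (((n : ℂ) + 1) * q z + (z - b) * deriv q z)) := by
    have hTall : ∀ᶠ z in 𝓝 b, ∀ m ∈ Finset.range (n + 1), 1 ≤ m →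
        f z ^ (m - 1) * deriv f z * u z ^ n
          = (z - b) ^ (m - 1)
            * (u z ^ (n - m) + (z - b) * (u z ^ (n - m + 1) * deriv v z)) := by
      rw [Filter.eventually_all_finset]
      intro m hm
      rcases Nat.eq_zero_or_pos m with rfl | hm1
      · exact Filter.Eventually.of_forall fun z h0 => absurd h0 (by omega)
      · filter_upwards [hT m hm1 (by simpa using Nat.lt_succ_iff.mp (Finset.mem_range.mp hm))]
          with z e _
        exact e
    filter_upwards [hE1, hTall] with z e1 eT
    have hsum1 : ∑ m ∈ Finset.range (n + 1), (a m * m)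
          * ((z - b) ^ (m - 1) * (u z ^ (n - m) + (z - b) * (u z ^ (n - m + 1) * deriv v z)))
        = ∑ m ∈ Finset.range (n + 1), u z ^ n * (a m * (m * f z ^ (m - 1) * deriv f z)) := by
      refine Finset.sum_congr rfl fun m hm => ?_
      rcases Nat.eq_zero_or_pos m with rfl | hm1
      · simp
      · rw [← eT m hm hm1]; ring
    rw [hsum1, ← Finset.mul_sum]
    linear_combination (u z ^ n) * e1
  -- key cancellation lemma
  have hkey : ∀ j : ℕ, 1 ≤ j →
      iteratedDeriv j (fun z => u z ^ j) b
        + (j : ℂ) * iteratedDeriv (j - 1) (fun z => u z ^ (j + 1) * deriv v z) b = 0 := by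
    intro j hj
    obtain ⟨j', rfl⟩ : ∃ j', j = j' + 1 := ⟨j - 1, by omega⟩
    have hder : deriv (fun z => u z ^ (j' + 1)) =ᶠ[𝓝 b]
        fun z => (-((j' : ℂ) + 1)) * (u z ^ (j' + 1 + 1) * deriv v z) := by
      filter_upwards [hu.eventually_analyticAt, hune] with z e1 e2
      have h1 := (e1.differentiableAt.hasDerivAt.fun_pow (j' + 1)).deriv
      have h2 : deriv v z = -deriv u z / u z ^ 2 := by
        rw [hvdef]
        exact (e1.differentiableAt.hasDerivAt.inv e2).deriv
      rw [h1, h2]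
      simp only [Nat.add_sub_cancel]
      push_cast
      field_simp
      ring
    have e3 : iteratedDeriv (j' + 1) (fun z => u z ^ (j' + 1)) b
        = iteratedDeriv j' (deriv (fun z => u z ^ (j' + 1))) b := by
      rw [iteratedDeriv_succ']
    rw [e3, hder.iteratedDeriv_eq j',
      iter_const_mul j' _ (by exact (hu.pow _).mul (aderiv hva))]
    simp only [Nat.add_sub_cancel]
    push_cast
    ring
  -- analyticity of the pieces
  have hAa : ∀ m : ℕ, AnalyticAt ℂ
      (fun z => u z ^ (n - m) + (z - b) * (u z ^ (n - m + 1) * deriv v z)) b := by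
    intro m
    exact (hu.pow _).add
      ((analyticAt_id.sub analyticAt_const).mul ((hu.pow _).mul (aderiv hva)))
  have hterm_an : ∀ m ∈ Finset.range (n + 1), AnalyticAt ℂ
      (fun z => (a m * m) * ((z - b) ^ (m - 1)
        * (u z ^ (n - m) + (z - b) * (u z ^ (n - m + 1) * deriv v z)))) b := by
    intro m _
    exact analyticAt_const.mul
      (((analyticAt_id.sub analyticAt_const).pow _).mul (hAa m))
  have hs1a : AnalyticAt ℂ (fun z => u z ^ n * (((n : ℂ) + 1) * q z + (z - b) * deriv q z)) b := by
    exact (hu.pow _).mul ((analyticAt_const.mul hqa).add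
      ((analyticAt_id.sub analyticAt_const).mul (aderiv hqa)))
  -- vanishing of the middle terms
  have hzero : ∀ m, 1 ≤ m → m < n →
      iteratedDeriv (n - m) (fun z =>
        u z ^ (n - m) + (z - b) * (u z ^ (n - m + 1) * deriv v z)) b = 0 := by
    intro m h1 h2
    have han1 : AnalyticAt ℂ (fun z => (z - b) * (u z ^ (n - m + 1) * deriv v z)) b := by
      exact (analyticAt_id.sub analyticAt_const).mul ((hu.pow _).mul (aderiv hva))
    have han2 : AnalyticAt ℂ (fun z => u z ^ (n - m + 1) * deriv v z) b := by
      exact (hu.pow _).mul (aderiv hva)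
    rw [iter_add (n - m) (hu.fun_pow _) han1, iter_shift1 (n - m) han2]
    exact hkey (n - m) (by omega)
  -- put everything together
  have hfinal := hE2.iteratedDeriv_eq (n - 1)
  rw [hfinal, iter_add (n - 1) (Finset.analyticAt_fun_sum _ hterm_an)
      (by exact ((analyticAt_id.sub analyticAt_const).pow n).mul hs1a),
    iter_shift n (n - 1) hs1a,
    Nat.descFactorial_eq_zero_iff_lt.mpr (show n - 1 < n by omega),
    iter_sum (n - 1) _ _ hterm_an]
  have hterm_val : ∀ m ∈ Finset.range (n + 1),
      iteratedDeriv (n - 1) (fun z => (a m * m) * ((z - b) ^ (m - 1)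
        * (u z ^ (n - m) + (z - b) * (u z ^ (n - m + 1) * deriv v z)))) b
      = if m = n then iteratedDeriv n h 0 else 0 := by
    intro m hm
    rw [iter_const_mul (n - 1) _ (by exact
        ((analyticAt_id.sub analyticAt_const).pow _).mul (hAa m)),
      iter_shift (m - 1) (n - 1) (hAa m)]
    rcases Nat.eq_zero_or_pos m with rfl | hm1
    · simp [if_neg (by omega : ¬ (0 : ℕ) = n)]
    rcases eq_or_lt_of_le (Nat.lt_succ_iff.mp (Finset.mem_range.mp hm)) with heq | hmn
    · subst heq
      rw [if_pos rfl]
      have e1 : m - 1 - (m - 1) = 0 := by omega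
      rw [e1, iteratedDeriv_zero]
      have e2 : u b ^ (m - m) + (b - b) * (u b ^ (m - m + 1) * deriv v b) = 1 := by
        simp
      rw [e2, Nat.descFactorial_self, hadef]
      simp only []
      have e5 : ((m : ℂ)) * (m - 1).factorial = m.factorial := by
        exact_mod_cast Nat.mul_factorial_pred (by omega)
      have e4 : (m.factorial : ℂ) ≠ 0 := by
        exact_mod_cast Nat.cast_ne_zero.mpr m.factorial_ne_zero
      field_simp
      linear_combination iteratedDeriv m h 0 * e5
    · rw [if_neg (by omega)]
      have e1 : n - 1 - (m - 1) = n - m := by omega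
      rw [e1, hzero m hm1 hmn]
      ring
  rw [Finset.sum_congr rfl hterm_val, Finset.sum_ite_eq' (Finset.range (n + 1)) n
      (fun _ => iteratedDeriv n h 0), if_pos (Finset.mem_range.mpr (by omega))]
  push_cast
  ring
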